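/- Let C be a commutative star ring in which 2 is invertible, A a unital *-algebra over C, and qA = (A[[λ]], ⋆) a Hermitian formal deformation of A. Then every unitary U_0 ∈ M_n(A) (i.e. U_0* U_0 = U_0 U_0* = 1) can be deformed into a unitary of the deformed matrix algebra: there exist U_r ∈ M_n(A) for r ≥ 1 such that U = U_0 + Σ_{r≥1} U_r λ^r satisfies U* ⋆ U = U ⋆ U* = 1 in M_n(A)[[λ]]. -/

import Mathlib

open scoped Matrix

/-- Cauchy-type convolution of two formal series along a family of
coefficient maps `B r : M → N → P`:  `(x ⋆ y) n = ∑_{r+i+j=n} B r (x i) (y j)`. -/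
def fdConv {M N P : Type*} [AddCommMonoid P] (B : ℕ → M → N → P)
    (x : ℕ → M) (y : ℕ → N) : ℕ → P := fun n =>
  ∑ p ∈ Finset.HasAntidiagonal.antidiagonal n, ∑ q ∈ Finset.HasAntidiagonal.antidiagonal p.2, B p.1 (x q.1) (y q.2)

/-- The unit formal series `1 + 0·λ + 0·λ² + ⋯`. -/
def fdOne (A : Type*) [One A] [Zero A] : ℕ → A := fun n => if n = 0 then 1 else 0

/-- An element viewed as a constant (order-zero) formal series. -/
def fdC {A : Type*} [Zero A] (a : A) : ℕ → A := fun n => if n = 0 then a else 0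

/-- Coefficientwise star of a formal series. -/
def fdStar {A : Type*} [Star A] (x : ℕ → A) : ℕ → A := fun n => star (x n)

/-- Action of a scalar series `c ∈ k[[λ]]` on series with coefficients in a `k`-module. -/
def fdSmul {k M : Type*} [Semiring k] [AddCommMonoid M] [Module k M]
    (c : ℕ → k) (x : ℕ → M) : ℕ → M := fun n =>
  ∑ p ∈ Finset.HasAntidiagonal.antidiagonal n, c p.1 • x p.2

/-- Order-by-order extension of a family of maps `T r : E → F` to formal series:
`(T x) n = ∑_{r+j=n} T r (x j)`. -/
def fdMap {E F : Type*} [AddCommMonoid F] (T : ℕ → E → F) (x : ℕ → E) : ℕ → F :=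
  fun n => ∑ p ∈ Finset.HasAntidiagonal.antidiagonal n, T p.1 (x p.2)

/-- A formal deformation (à la Gerstenhaber) of a unital `k`-algebra `A`:
a family of `k`-bilinear cochains `C r` with `C 0` the original product, whose
convolution product on `A[[λ]]` is associative and unital (with the same unit). -/
structure FormalDeformation (k A : Type*) [CommRing k] [Ring A] [Algebra k A] where
  C : ℕ → A →ₗ[k] A →ₗ[k] A
  C_zero : ∀ a b : A, C 0 a b = a * b
  assoc : ∀ x y z : ℕ → A,
    fdConv (fun r a b => C r a b) (fdConv (fun r a b => C r a b) x y) z =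
      fdConv (fun r a b => C r a b) x (fdConv (fun r a b => C r a b) y z)
  one_mul : ∀ x : ℕ → A, fdConv (fun r a b => C r a b) (fdOne A) x = x
  mul_one : ∀ x : ℕ → A, fdConv (fun r a b => C r a b) x (fdOne A) = x

namespace FormalDeformation

variable {k A : Type*} [CommRing k] [Ring A] [Algebra k A]

/-- The deformed product on `A[[λ]]`. -/
def mul (D : FormalDeformation k A) : (ℕ → A) → (ℕ → A) → ℕ → A :=
  fdConv fun r a b => D.C r a b

/-- A deformation of a `*`-algebra is Hermitian if the coefficientwise extension of
the involution is still an involution for the deformed product. -/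
def IsHermitian [StarRing A] (D : FormalDeformation k A) : Prop :=
  ∀ x y : ℕ → A, fdStar (D.mul x y) = D.mul (fdStar y) (fdStar x)

/-- The extension of the deformation cochains to matrices. -/
def matC (D : FormalDeformation k A) (n : ℕ) (r : ℕ)
    (L S : Matrix (Fin n) (Fin n) A) : Matrix (Fin n) (Fin n) A :=
  Matrix.of fun i j => ∑ s, D.C r (L i s) (S s j)

/-- The deformed product on `M_n(A)[[λ]] = M_n(A[[λ]])`. -/
def matMul (D : FormalDeformation k A) (n : ℕ) :
    (ℕ → Matrix (Fin n) (Fin n) A) → (ℕ → Matrix (Fin n) (Fin n) A) →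
      ℕ → Matrix (Fin n) (Fin n) A :=
  fdConv (D.matC n)

/-- The deformed left action of `M_n(A)[[λ]]` on column vectors `A^n[[λ]]`. -/
def mvMul (D : FormalDeformation k A) (n : ℕ) :
    (ℕ → Matrix (Fin n) (Fin n) A) → (ℕ → Fin n → A) → ℕ → Fin n → A :=
  fdConv fun r L v => fun i => ∑ j, D.C r (L i j) (v j)

/-- The deformed right action of `A[[λ]]` on column vectors `A^n[[λ]]`. -/
def vsMul (D : FormalDeformation k A) (n : ℕ) :
    (ℕ → Fin n → A) → (ℕ → A) → ℕ → Fin n → A :=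
  fdConv fun r v a => fun i => D.C r (v i) a

end FormalDeformation

section Aux

open Finset

namespace FormalDeformation

variable {C A : Type*} [CommRing C] [Ring A] [Algebra C A]

lemma mul_fdC_left (D : FormalDeformation C A) (a : A) (y : ℕ → A) (m : ℕ) :
    D.mul (fdC a) y m = ∑ p ∈ Finset.HasAntidiagonal.antidiagonal m, D.C p.1 a (y p.2) := by
  unfold FormalDeformation.mul fdConv
  refine Finset.sum_congr rfl fun p hp => ?_
  rw [Finset.sum_eq_single_of_mem ((0 : ℕ), p.2) (by simp)]
  · simp [fdC]
  · intro q hq hne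
    have hq' := Finset.HasAntidiagonal.mem_antidiagonal.mp hq
    have hne' : ¬(q.1 = 0 ∧ q.2 = p.2) := by simpa [Prod.ext_iff] using hne
    have hq1 : q.1 ≠ 0 := by omega
    simp [fdC, hq1]

lemma mul_fdC_right (D : FormalDeformation C A) (x : ℕ → A) (b : A) (m : ℕ) :
    D.mul x (fdC b) m = ∑ p ∈ Finset.HasAntidiagonal.antidiagonal m, D.C p.1 (x p.2) b := by
  unfold FormalDeformation.mul fdConv
  refine Finset.sum_congr rfl fun p hp => ?_
  rw [Finset.sum_eq_single_of_mem ((p.2 : ℕ), (0 : ℕ)) (by simp)]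
  · simp [fdC]
  · intro q hq hne
    have hq' := Finset.HasAntidiagonal.mem_antidiagonal.mp hq
    have hne' : ¬(q.1 = p.2 ∧ q.2 = 0) := by simpa [Prod.ext_iff] using hne
    have hq2 : q.2 ≠ 0 := by omega
    simp [fdC, hq2]

lemma mul_fdC_fdC (D : FormalDeformation C A) (a b : A) (m : ℕ) :
    D.mul (fdC a) (fdC b) m = D.C m a b := by
  rw [mul_fdC_left]
  rw [Finset.sum_eq_single_of_mem ((m : ℕ), (0 : ℕ)) (by simp)]
  · simp [fdC]
  · intro q hq hne
    have hq' := Finset.HasAntidiagonal.mem_antidiagonal.mp hq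
    have hne' : ¬(q.1 = m ∧ q.2 = 0) := by simpa [Prod.ext_iff] using hne
    have hq2 : q.2 ≠ 0 := by omega
    simp [fdC, hq2]

lemma fdOne_eq_fdC : fdOne A = fdC (1 : A) := rfl

lemma C_one_left (D : FormalDeformation C A) (r : ℕ) (a : A) :
    D.C r 1 a = if r = 0 then a else 0 := by
  have h := congrFun (D.one_mul (fdC a)) r
  rw [show fdConv (fun r a b => D.C r a b) (fdOne A) (fdC a) = D.mul (fdOne A) (fdC a) from rfl,
    fdOne_eq_fdC, mul_fdC_fdC] at h
  simpa [fdC] using h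

lemma C_one_right (D : FormalDeformation C A) (r : ℕ) (a : A) :
    D.C r a 1 = if r = 0 then a else 0 := by
  have h := congrFun (D.mul_one (fdC a)) r
  rw [show fdConv (fun r a b => D.C r a b) (fdC a) (fdOne A) = D.mul (fdC a) (fdOne A) from rfl,
    fdOne_eq_fdC, mul_fdC_fdC] at h
  simpa [fdC] using h

lemma cochain_assoc (D : FormalDeformation C A) (m : ℕ) (a b c : A) :
    ∑ p ∈ Finset.HasAntidiagonal.antidiagonal m, D.C p.1 (D.C p.2 a b) c =
      ∑ p ∈ Finset.HasAntidiagonal.antidiagonal m, D.C p.1 a (D.C p.2 b c) := by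
  have h := congrFun (D.assoc (fdC a) (fdC b) (fdC c)) m
  rw [show fdConv (fun r a b => D.C r a b) = D.mul from rfl] at h
  rw [mul_fdC_right, mul_fdC_left] at h
  calc ∑ p ∈ Finset.HasAntidiagonal.antidiagonal m, D.C p.1 (D.C p.2 a b) c
      = ∑ p ∈ Finset.HasAntidiagonal.antidiagonal m, D.C p.1 (D.mul (fdC a) (fdC b) p.2) c := by
        refine Finset.sum_congr rfl fun p _ => by rw [mul_fdC_fdC]
    _ = ∑ p ∈ Finset.HasAntidiagonal.antidiagonal m, D.C p.1 a (D.mul (fdC b) (fdC c) p.2) := h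
    _ = ∑ p ∈ Finset.HasAntidiagonal.antidiagonal m, D.C p.1 a (D.C p.2 b c) := by
        refine Finset.sum_congr rfl fun p _ => by rw [mul_fdC_fdC]

lemma fdStar_fdC [StarRing A] (b : A) : fdStar (fdC b) = fdC (star b) := by
  funext n
  by_cases h : n = 0 <;> simp [fdStar, fdC, h]

lemma star_C [StarRing A] {D : FormalDeformation C A} (hD : D.IsHermitian)
    (r : ℕ) (a b : A) : star (D.C r a b) = D.C r (star b) (star a) := by
  have h := congrFun (hD (fdC a) (fdC b)) r
  rw [fdStar_fdC, fdStar_fdC, mul_fdC_fdC] at h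
  simpa [fdStar, mul_fdC_fdC] using h

lemma mul_sum_left (D : FormalDeformation C A) {ι : Type*} (s : Finset ι)
    (f : ι → ℕ → A) (z : ℕ → A) (m : ℕ) :
    D.mul (fun d => ∑ t ∈ s, f t d) z m = ∑ t ∈ s, D.mul (f t) z m := by
  unfold FormalDeformation.mul fdConv
  simp only [map_sum, LinearMap.coe_sum, Finset.sum_apply, LinearMap.sum_apply]
  rw [Finset.sum_comm]
  refine Finset.sum_congr rfl fun p _ => Finset.sum_comm

lemma mul_sum_right (D : FormalDeformation C A) {ι : Type*} (s : Finset ι)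
    (x : ℕ → A) (f : ι → ℕ → A) (m : ℕ) :
    D.mul x (fun d => ∑ t ∈ s, f t d) m = ∑ t ∈ s, D.mul x (f t) m := by
  unfold FormalDeformation.mul fdConv
  simp only [map_sum]
  rw [Finset.sum_comm]
  refine Finset.sum_congr rfl fun p _ => Finset.sum_comm

lemma mul_zero_left (D : FormalDeformation C A) (z : ℕ → A) (m : ℕ) :
    D.mul (fun _ => (0 : A)) z m = 0 := by
  unfold FormalDeformation.mul fdConv
  simp

lemma matMul_apply (D : FormalDeformation C A) (n : ℕ)
    (X Y : ℕ → Matrix (Fin n) (Fin n) A) (m : ℕ) (i j : Fin n) :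
    D.matMul n X Y m i j = ∑ s, D.mul (fun d => X d i s) (fun d => Y d s j) m := by
  unfold FormalDeformation.matMul FormalDeformation.mul fdConv matC
  simp only [Matrix.sum_apply, Matrix.of_apply]
  rw [Finset.sum_comm]
  refine Finset.sum_congr rfl fun p _ => Finset.sum_comm

lemma matMul_assoc (D : FormalDeformation C A) (n : ℕ)
    (X Y Z : ℕ → Matrix (Fin n) (Fin n) A) :
    D.matMul n (D.matMul n X Y) Z = D.matMul n X (D.matMul n Y Z) := by
  funext m
  ext i j
  rw [matMul_apply, matMul_apply]
  have hL : ∀ s : Fin n,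
      D.mul (fun d => D.matMul n X Y d i s) (fun d => Z d s j) m
        = ∑ t, D.mul (D.mul (fun d => X d i t) (fun d => Y d t s)) (fun d => Z d s j) m := by
    intro s
    rw [show (fun d => D.matMul n X Y d i s)
        = (fun d => ∑ t, D.mul (fun e => X e i t) (fun e => Y e t s) d) from
      funext fun d => matMul_apply D n X Y d i s]
    exact mul_sum_left D _ _ _ m
  have hR : ∀ t : Fin n,
      D.mul (fun d => X d i t) (fun d => D.matMul n Y Z d t j) m
        = ∑ s, D.mul (fun d => X d i t) (D.mul (fun d => Y d t s) (fun d => Z d s j)) m := by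
    intro t
    rw [show (fun d => D.matMul n Y Z d t j)
        = (fun d => ∑ s, D.mul (fun e => Y e t s) (fun e => Z e s j) d) from
      funext fun d => matMul_apply D n Y Z d t j]
    exact mul_sum_right D _ _ _ m
  simp only [hL, hR]
  rw [Finset.sum_comm]
  refine Finset.sum_congr rfl fun s _ => Finset.sum_congr rfl fun t _ => ?_
  exact congrFun (D.assoc (fun d => X d i s) (fun d => Y d s t) (fun d => Z d t j)) m

lemma one_matMul (D : FormalDeformation C A) (n : ℕ)
    (X : ℕ → Matrix (Fin n) (Fin n) A) :
    D.matMul n (fdOne (Matrix (Fin n) (Fin n) A)) X = X := by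
  funext m
  ext i j
  rw [matMul_apply]
  rw [Finset.sum_eq_single_of_mem i (Finset.mem_univ i)]
  · have : (fun d => fdOne (Matrix (Fin n) (Fin n) A) d i i) = fdOne A := by
      funext d
      by_cases h : d = 0 <;> simp [fdOne, h, Matrix.one_apply]
    rw [this]
    exact congrFun (D.one_mul (fun d => X d i j)) m
  · intro s _ hs
    have : (fun d => fdOne (Matrix (Fin n) (Fin n) A) d i s) = (fun _ => (0 : A)) := by
      funext d
      by_cases h : d = 0 <;> simp [fdOne, h, Matrix.one_apply, (Ne.symm hs : i ≠ s)]
    rw [this, mul_zero_left]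

lemma matMul_one (D : FormalDeformation C A) (n : ℕ)
    (X : ℕ → Matrix (Fin n) (Fin n) A) :
    D.matMul n X (fdOne (Matrix (Fin n) (Fin n) A)) = X := by
  funext m
  ext i j
  rw [matMul_apply]
  rw [Finset.sum_eq_single_of_mem j (Finset.mem_univ j)]
  · have : (fun d => fdOne (Matrix (Fin n) (Fin n) A) d j j) = fdOne A := by
      funext d
      by_cases h : d = 0 <;> simp [fdOne, h, Matrix.one_apply]
    rw [this]
    exact congrFun (D.mul_one (fun d => X d i j)) m
  · intro s _ hs
    have h0 : (fun d => fdOne (Matrix (Fin n) (Fin n) A) d s j) = (fun _ => (0 : A)) := by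
      funext d
      by_cases h : d = 0 <;> simp [fdOne, h, Matrix.one_apply, hs]
    rw [h0]
    unfold FormalDeformation.mul fdConv
    simp

lemma matC_zero (D : FormalDeformation C A) (n : ℕ)
    (L S : Matrix (Fin n) (Fin n) A) : D.matC n 0 L S = L * S := by
  ext i j
  simp [matC, D.C_zero, Matrix.mul_apply]

lemma matC_star [StarRing C] [StarRing A] [StarModule C A] {D : FormalDeformation C A}
    (hD : D.IsHermitian) (n r : ℕ) (L S : Matrix (Fin n) (Fin n) A) :
    (D.matC n r L S)ᴴ = D.matC n r Sᴴ Lᴴ := by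
  ext i j
  simp only [Matrix.conjTranspose_apply, matC, Matrix.of_apply, star_sum]
  refine Finset.sum_congr rfl fun s _ => ?_
  rw [star_C hD]

end FormalDeformation

end Aux

section Aux2

open Finset

namespace FormalDeformation

variable {C A : Type*} [CommRing C] [Ring A] [Algebra C A]

/-- The "known" (lower-order) part of the coefficient of `U* ⋆ U` at order `m`. -/
def Eterm [StarRing A] (D : FormalDeformation C A) (n : ℕ)
    (U : ℕ → Matrix (Fin n) (Fin n) A) (m : ℕ) : Matrix (Fin n) (Fin n) A :=
  ∑ p ∈ Finset.HasAntidiagonal.antidiagonal m, ∑ q ∈ Finset.HasAntidiagonal.antidiagonal p.2,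
    if q.1 < m ∧ q.2 < m then D.matC n p.1 (U q.1)ᴴ (U q.2) else 0

/-- The deformed unitary, constructed order by order. -/
noncomputable def Useq [Invertible (2 : C)] [StarRing A]
    (D : FormalDeformation C A) (n : ℕ) (U₀ : Matrix (Fin n) (Fin n) A) :
    ℕ → Matrix (Fin n) (Fin n) A
  | 0 => U₀
  | (m + 1) =>
      -((⅟2 : C) • (U₀ * ∑ p ∈ Finset.HasAntidiagonal.antidiagonal (m + 1), ∑ q ∈ Finset.HasAntidiagonal.antidiagonal p.2,
        if h : q.1 < m + 1 ∧ q.2 < m + 1 then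
          D.matC n p.1 (Useq D n U₀ q.1)ᴴ (Useq D n U₀ q.2) else 0))
  termination_by m => m
  decreasing_by
  · exact h.1
  · exact h.2

lemma Useq_zero [Invertible (2 : C)] [StarRing A]
    (D : FormalDeformation C A) (n : ℕ) (U₀ : Matrix (Fin n) (Fin n) A) :
    Useq D n U₀ 0 = U₀ := by
  rw [Useq]

lemma Useq_succ [Invertible (2 : C)] [StarRing A]
    (D : FormalDeformation C A) (n : ℕ) (U₀ : Matrix (Fin n) (Fin n) A) (m : ℕ) :
    Useq D n U₀ (m + 1) = -((⅟2 : C) • (U₀ * Eterm D n (Useq D n U₀) (m + 1))) := by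
  rw [Useq, Eterm]
  simp only [dite_eq_ite]

/-- The "known" (lower-order) part of the coefficient of `U ⋆ V` at order `m`. -/
def Rterm (D : FormalDeformation C A) (n : ℕ)
    (U V : ℕ → Matrix (Fin n) (Fin n) A) (m : ℕ) : Matrix (Fin n) (Fin n) A :=
  ∑ p ∈ Finset.HasAntidiagonal.antidiagonal m, ∑ q ∈ Finset.HasAntidiagonal.antidiagonal p.2,
    if q.2 < m then D.matC n p.1 (U q.1) (V q.2) else 0

/-- A right inverse of `U` w.r.t. the deformed product, constructed order by order. -/
noncomputable def Vseq (D : FormalDeformation C A) (n : ℕ)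
    (U : ℕ → Matrix (Fin n) (Fin n) A) (W V₀ : Matrix (Fin n) (Fin n) A) :
    ℕ → Matrix (Fin n) (Fin n) A
  | 0 => V₀
  | (m + 1) =>
      -(W * ∑ p ∈ Finset.HasAntidiagonal.antidiagonal (m + 1), ∑ q ∈ Finset.HasAntidiagonal.antidiagonal p.2,
        if h : q.2 < m + 1 then D.matC n p.1 (U q.1) (Vseq D n U W V₀ q.2) else 0)
  termination_by m => m
  decreasing_by exact h

lemma Vseq_zero (D : FormalDeformation C A) (n : ℕ)
    (U : ℕ → Matrix (Fin n) (Fin n) A) (W V₀ : Matrix (Fin n) (Fin n) A) :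
    Vseq D n U W V₀ 0 = V₀ := by
  rw [Vseq]

lemma Vseq_succ (D : FormalDeformation C A) (n : ℕ)
    (U : ℕ → Matrix (Fin n) (Fin n) A) (W V₀ : Matrix (Fin n) (Fin n) A) (m : ℕ) :
    Vseq D n U W V₀ (m + 1) = -(W * Rterm D n U (Vseq D n U W V₀) (m + 1)) := by
  rw [Vseq, Rterm]
  simp only [dite_eq_ite]

lemma Eterm_conjTranspose [StarRing C] [Invertible (2 : C)] [StarRing A] [StarModule C A]
    {D : FormalDeformation C A} (hD : D.IsHermitian) (n : ℕ)
    (U : ℕ → Matrix (Fin n) (Fin n) A) (m : ℕ) :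
    (Eterm D n U m)ᴴ = Eterm D n U m := by
  unfold Eterm
  rw [Matrix.conjTranspose_sum]
  refine Finset.sum_congr rfl fun p _ => ?_
  rw [Matrix.conjTranspose_sum]
  have step : ∀ q ∈ Finset.HasAntidiagonal.antidiagonal p.2,
      (if q.1 < m ∧ q.2 < m then D.matC n p.1 (U q.1)ᴴ (U q.2) else 0)ᴴ
        = (if q.2 < m ∧ q.1 < m then D.matC n p.1 (U q.2)ᴴ (U q.1) else 0) := by
    intro q _
    by_cases h : q.1 < m ∧ q.2 < m
    · rw [if_pos h, if_pos ⟨h.2, h.1⟩, matC_star hD, Matrix.conjTranspose_conjTranspose]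
    · rw [if_neg h, if_neg (by tauto), Matrix.conjTranspose_zero]
  rw [Finset.sum_congr rfl step]
  conv_lhs => rw [← Finset.HasAntidiagonal.map_swap_antidiagonal (n := p.2)]
  rw [Finset.sum_map]
  refine Finset.sum_congr rfl fun q _ => by simp [Prod.swap]

end FormalDeformation

end Aux2

section Aux3

open Finset

namespace FormalDeformation

variable {C A : Type*} [CommRing C] [Ring A] [Algebra C A]

lemma star_invOf_two [StarRing C] [Invertible (2 : C)] : star (⅟2 : C) = ⅟2 := by
  have h2 : star (2 : C) = 2 := by
    rw [show (2 : C) = 1 + 1 by norm_num, star_add, star_one]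
  have h : (2 : C) * star (⅟2 : C) = 1 := by
    have := congrArg star (invOf_mul_self (2 : C))
    rwa [star_mul, h2, star_one] at this
  exact (invOf_eq_right_inv h).symm

lemma Useq_left [StarRing C] [Invertible (2 : C)] [StarRing A] [StarModule C A]
    {D : FormalDeformation C A} (hD : D.IsHermitian) (n : ℕ)
    (U₀ : Matrix (Fin n) (Fin n) A) (hU₀left : U₀ᴴ * U₀ = 1) :
    D.matMul n (fun m => (Useq D n U₀ m)ᴴ) (Useq D n U₀)
      = fdOne (Matrix (Fin n) (Fin n) A) := by
  funext m
  match m with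
  | 0 =>
    simp only [FormalDeformation.matMul, fdConv, Finset.Nat.antidiagonal_zero,
      Finset.sum_singleton]
    rw [matC_zero, Useq_zero, hU₀left]
    simp [fdOne]
  | (m + 1) =>
    have hE : (Eterm D n (Useq D n U₀) (m+1))ᴴ = Eterm D n (Useq D n U₀) (m+1) :=
      Eterm_conjTranspose hD n _ (m+1)
    simp only [FormalDeformation.matMul, fdConv]
    have hsplit : ∀ p ∈ Finset.HasAntidiagonal.antidiagonal (m+1), ∀ q ∈ Finset.HasAntidiagonal.antidiagonal p.2,
        D.matC n p.1 (Useq D n U₀ q.1)ᴴ (Useq D n U₀ q.2)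
          = (if q.1 < m+1 ∧ q.2 < m+1 then
                D.matC n p.1 (Useq D n U₀ q.1)ᴴ (Useq D n U₀ q.2) else 0)
            + (if q.1 < m+1 ∧ q.2 < m+1 then 0 else
                D.matC n p.1 (Useq D n U₀ q.1)ᴴ (Useq D n U₀ q.2)) := by
      intro p _ q _
      by_cases h : q.1 < m+1 ∧ q.2 < m+1
      · rw [if_pos h, if_pos h, add_zero]
      · rw [if_neg h, if_neg h, zero_add]
    rw [Finset.sum_congr rfl fun p hp => Finset.sum_congr rfl (hsplit p hp)]
    rw [Finset.sum_congr rfl fun p _ => Finset.sum_add_distrib, Finset.sum_add_distrib]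
    have hfirst : (∑ p ∈ Finset.HasAntidiagonal.antidiagonal (m+1), ∑ q ∈ Finset.HasAntidiagonal.antidiagonal p.2,
        if q.1 < m+1 ∧ q.2 < m+1 then
          D.matC n p.1 (Useq D n U₀ q.1)ᴴ (Useq D n U₀ q.2) else 0)
        = Eterm D n (Useq D n U₀) (m+1) := rfl
    have hside : ∀ p ∈ Finset.HasAntidiagonal.antidiagonal (m+1), p ≠ ((0:ℕ), m+1) →
        (∑ q ∈ Finset.HasAntidiagonal.antidiagonal p.2,
          if q.1 < m+1 ∧ q.2 < m+1 then 0 else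
            D.matC n p.1 (Useq D n U₀ q.1)ᴴ (Useq D n U₀ q.2)) = 0 := by
      intro p hp hne
      have hp' := Finset.HasAntidiagonal.mem_antidiagonal.mp hp
      have hne' : ¬(p.1 = 0 ∧ p.2 = m+1) := by simpa [Prod.ext_iff] using hne
      refine Finset.sum_eq_zero fun q hq => ?_
      have hq' := Finset.HasAntidiagonal.mem_antidiagonal.mp hq
      exact if_pos ⟨by omega, by omega⟩
    have hsecond : (∑ p ∈ Finset.HasAntidiagonal.antidiagonal (m+1), ∑ q ∈ Finset.HasAntidiagonal.antidiagonal p.2,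
        if q.1 < m+1 ∧ q.2 < m+1 then 0 else
          D.matC n p.1 (Useq D n U₀ q.1)ᴴ (Useq D n U₀ q.2))
        = (Useq D n U₀ (m+1))ᴴ * U₀ + U₀ᴴ * Useq D n U₀ (m+1) := by
      rw [Finset.sum_eq_single_of_mem ((0:ℕ), m+1) (by simp) hside]
      dsimp only
      have hsub : ({((m+1:ℕ), (0:ℕ)), ((0:ℕ), (m+1:ℕ))} : Finset (ℕ × ℕ))
          ⊆ Finset.HasAntidiagonal.antidiagonal (m+1) := by
        intro x hx
        simp only [Finset.mem_insert, Finset.mem_singleton] at hx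
        rcases hx with h | h <;> simp [h]
      have hvan : ∀ q ∈ Finset.HasAntidiagonal.antidiagonal (m+1),
          q ∉ ({((m+1:ℕ), (0:ℕ)), ((0:ℕ), (m+1:ℕ))} : Finset (ℕ × ℕ)) →
          (if q.1 < m+1 ∧ q.2 < m+1 then 0 else
            D.matC n 0 (Useq D n U₀ q.1)ᴴ (Useq D n U₀ q.2)) = 0 := by
        intro q hq hqn
        have h1 := Finset.HasAntidiagonal.mem_antidiagonal.mp hq
        have h2 : ¬(q.1 = m+1 ∧ q.2 = 0) ∧ ¬(q.1 = 0 ∧ q.2 = m+1) := by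
          simpa [Prod.ext_iff, not_or] using hqn
        obtain ⟨h2a, h2b⟩ := h2
        exact if_pos ⟨by omega, by omega⟩
      rw [← Finset.sum_subset hsub hvan]
      rw [Finset.sum_insert (by simp), Finset.sum_singleton]
      dsimp only
      rw [if_neg (by omega), if_neg (by omega), matC_zero, matC_zero, Useq_zero]
    rw [hfirst, hsecond, Useq_succ D n U₀ m]
    have hA : (-((⅟2 : C) • (U₀ * Eterm D n (Useq D n U₀) (m+1))))ᴴ * U₀
        = -((⅟2 : C) • Eterm D n (Useq D n U₀) (m+1)) := by
      rw [Matrix.conjTranspose_neg, Matrix.conjTranspose_smul, Matrix.conjTranspose_mul,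
        hE, star_invOf_two, neg_mul, Matrix.smul_mul, mul_assoc, hU₀left, _root_.mul_one]
    have hB : U₀ᴴ * (-((⅟2 : C) • (U₀ * Eterm D n (Useq D n U₀) (m+1))))
        = -((⅟2 : C) • Eterm D n (Useq D n U₀) (m+1)) := by
      rw [mul_neg, Matrix.mul_smul, ← mul_assoc, hU₀left, _root_.one_mul]
    rw [hA, hB, ← neg_add, ← add_smul, invOf_two_add_invOf_two, one_smul]
    simp [fdOne]

lemma Vseq_right (D : FormalDeformation C A) (n : ℕ)
    (U : ℕ → Matrix (Fin n) (Fin n) A) (W V₀ : Matrix (Fin n) (Fin n) A)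
    (hW : U 0 * W = 1) (hV₀ : U 0 * V₀ = 1) :
    D.matMul n U (Vseq D n U W V₀) = fdOne (Matrix (Fin n) (Fin n) A) := by
  funext m
  match m with
  | 0 =>
    simp only [FormalDeformation.matMul, fdConv, Finset.Nat.antidiagonal_zero,
      Finset.sum_singleton]
    rw [matC_zero, Vseq_zero, hV₀]
    simp [fdOne]
  | (m + 1) =>
    simp only [FormalDeformation.matMul, fdConv]
    have hsplit : ∀ p ∈ Finset.HasAntidiagonal.antidiagonal (m+1), ∀ q ∈ Finset.HasAntidiagonal.antidiagonal p.2,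
        D.matC n p.1 (U q.1) (Vseq D n U W V₀ q.2)
          = (if q.2 < m+1 then D.matC n p.1 (U q.1) (Vseq D n U W V₀ q.2) else 0)
            + (if q.2 < m+1 then 0 else D.matC n p.1 (U q.1) (Vseq D n U W V₀ q.2)) := by
      intro p _ q _
      by_cases h : q.2 < m+1 <;> simp [h]
    rw [Finset.sum_congr rfl fun p hp => Finset.sum_congr rfl (hsplit p hp)]
    rw [Finset.sum_congr rfl fun p _ => Finset.sum_add_distrib, Finset.sum_add_distrib]
    have hfirst : (∑ p ∈ Finset.HasAntidiagonal.antidiagonal (m+1), ∑ q ∈ Finset.HasAntidiagonal.antidiagonal p.2,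
        if q.2 < m+1 then D.matC n p.1 (U q.1) (Vseq D n U W V₀ q.2) else 0)
        = Rterm D n U (Vseq D n U W V₀) (m+1) := rfl
    have hside : ∀ p ∈ Finset.HasAntidiagonal.antidiagonal (m+1), p ≠ ((0:ℕ), m+1) →
        (∑ q ∈ Finset.HasAntidiagonal.antidiagonal p.2,
          if q.2 < m+1 then 0 else D.matC n p.1 (U q.1) (Vseq D n U W V₀ q.2)) = 0 := by
      intro p hp hne
      have hp' := Finset.HasAntidiagonal.mem_antidiagonal.mp hp
      have hne' : ¬(p.1 = 0 ∧ p.2 = m+1) := by simpa [Prod.ext_iff] using hne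
      refine Finset.sum_eq_zero fun q hq => ?_
      have hq' := Finset.HasAntidiagonal.mem_antidiagonal.mp hq
      exact if_pos (by omega)
    have hside2 : ∀ q ∈ Finset.HasAntidiagonal.antidiagonal (m+1), q ≠ ((0:ℕ), m+1) →
        (if q.2 < m+1 then 0 else D.matC n 0 (U q.1) (Vseq D n U W V₀ q.2)) = 0 := by
      intro q hq hne
      have hq' := Finset.HasAntidiagonal.mem_antidiagonal.mp hq
      have hne' : ¬(q.1 = 0 ∧ q.2 = m+1) := by simpa [Prod.ext_iff] using hne
      exact if_pos (by omega)
    have hsecond : (∑ p ∈ Finset.HasAntidiagonal.antidiagonal (m+1), ∑ q ∈ Finset.HasAntidiagonal.antidiagonal p.2,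
        if q.2 < m+1 then 0 else D.matC n p.1 (U q.1) (Vseq D n U W V₀ q.2))
        = U 0 * Vseq D n U W V₀ (m+1) := by
      rw [Finset.sum_eq_single_of_mem ((0:ℕ), m+1) (by simp) hside]
      dsimp only
      rw [Finset.sum_eq_single_of_mem ((0:ℕ), m+1) (by simp) hside2]
      dsimp only
      rw [if_neg (by omega), matC_zero]
    rw [hfirst, hsecond, Vseq_succ, mul_neg, ← mul_assoc, hW, _root_.one_mul]
    simp [fdOne]

end FormalDeformation

end Aux3

/-- Every unitary `U₀ ∈ Mₙ(A)` can be deformed into a unitary of the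
deformed matrix algebra `Mₙ(qA)`. -/
theorem unitary_deformation {C A : Type*} [CommRing C] [StarRing C]
    [Invertible (2 : C)] [Ring A] [Algebra C A] [StarRing A] [StarModule C A]
    (D : FormalDeformation C A) (hD : D.IsHermitian) (n : ℕ)
    (U₀ : Matrix (Fin n) (Fin n) A)
    (hU₀left : U₀ᴴ * U₀ = 1) (hU₀right : U₀ * U₀ᴴ = 1) :
    ∃ U : ℕ → Matrix (Fin n) (Fin n) A, U 0 = U₀ ∧
      D.matMul n (fun m => (U m)ᴴ) U = fdOne (Matrix (Fin n) (Fin n) A) ∧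
      D.matMul n U (fun m => (U m)ᴴ) = fdOne (Matrix (Fin n) (Fin n) A) := by
  classical
  have hU0 : D.Useq n U₀ 0 = U₀ := FormalDeformation.Useq_zero D n U₀
  have hleft := FormalDeformation.Useq_left hD n U₀ hU₀left
  have hright := FormalDeformation.Vseq_right D n (D.Useq n U₀) U₀ᴴ U₀ᴴ
    (by rw [hU0]; exact hU₀right) (by rw [hU0]; exact hU₀right)
  have hVU : D.Vseq n (D.Useq n U₀) U₀ᴴ U₀ᴴ = fun m => (D.Useq n U₀ m)ᴴ := by
    calc D.Vseq n (D.Useq n U₀) U₀ᴴ U₀ᴴ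
        = D.matMul n (fdOne (Matrix (Fin n) (Fin n) A)) (D.Vseq n (D.Useq n U₀) U₀ᴴ U₀ᴴ) :=
          (FormalDeformation.one_matMul D n _).symm
      _ = D.matMul n (D.matMul n (fun m => (D.Useq n U₀ m)ᴴ) (D.Useq n U₀))
            (D.Vseq n (D.Useq n U₀) U₀ᴴ U₀ᴴ) := by rw [hleft]
      _ = D.matMul n (fun m => (D.Useq n U₀ m)ᴴ)
            (D.matMul n (D.Useq n U₀) (D.Vseq n (D.Useq n U₀) U₀ᴴ U₀ᴴ)) :=
          FormalDeformation.matMul_assoc D n _ _ _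
      _ = D.matMul n (fun m => (D.Useq n U₀ m)ᴴ) (fdOne (Matrix (Fin n) (Fin n) A)) := by
          rw [hright]
      _ = fun m => (D.Useq n U₀ m)ᴴ := FormalDeformation.matMul_one D n _
  exact ⟨D.Useq n U₀, hU0, hleft, by rw [← hVU]; exact hright⟩
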